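/- Let x, y ∈ ℝ^N be sorted in nondecreasing order with Σ_i x_i = 0 and Σ_i y_i = 0, and let c ≥ 0 be a constant. If (Σ_i x_i y_i + c)² ≥ (Σ_i x_i y_{N+1−i} + c)², then for every permutation σ of {1,...,N}: (Σ_i x_i y_{σ(i)} + c)² ≤ (Σ_i x_i y_i + c)². Otherwise, (Σ_i x_i y_{σ(i)} + c)² ≤ (Σ_i x_i y_{N+1−i} + c)² for every permutation σ. -/
import Mathlib


open Finset

lemma fgw_key (N : ℕ) (x y : Fin N → ℝ) (hx : Monotone x) (hy : Monotone y)
    (σ : Equiv.Perm (Fin N)) :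
    ∑ i, x i * y i.rev ≤ ∑ i, x i * y (σ i) ∧ ∑ i, x i * y (σ i) ≤ ∑ i, x i * y i := by
  have hmono : Monovary x y := hx.monovary hy
  constructor
  · have hanti : Antivary x (fun i => y i.rev) := by
      intro i j hij
      by_contra hlt
      push_neg at hlt
      exact absurd (hy (Fin.rev_le_rev.2 (hx.reflect_lt hlt).le)) (not_le.2 hij)
    have := hanti.sum_mul_le_sum_mul_comp_perm (σ := σ.trans (Fin.revPerm))
    simpa [Fin.rev_rev] using this
  · exact hmono.sum_mul_comp_perm_le_sum_mul (σ := σ)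

/-- For zero-mean nondecreasing sequences, `(∑ x_i y_{σ(i)} + c)²` is maximized either
at the identity or at the anti-identity permutation. -/
theorem fgw_reduced_objective_max (N : ℕ) (x y : Fin N → ℝ)
    (hx : Monotone x) (hy : Monotone y)
    (hx0 : ∑ i, x i = 0) (hy0 : ∑ i, y i = 0)
    (c : ℝ) (hc : 0 ≤ c) :
    (((∑ i, x i * y i + c) ^ 2 ≥ (∑ i, x i * y i.rev + c) ^ 2) →
        ∀ σ : Equiv.Perm (Fin N),
          (∑ i, x i * y (σ i) + c) ^ 2 ≤ (∑ i, x i * y i + c) ^ 2)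
    ∧ (¬ ((∑ i, x i * y i + c) ^ 2 ≥ (∑ i, x i * y i.rev + c) ^ 2) →
        ∀ σ : Equiv.Perm (Fin N),
          (∑ i, x i * y (σ i) + c) ^ 2 ≤ (∑ i, x i * y i.rev + c) ^ 2) := by
  constructor
  · intro h σ
    obtain ⟨h1, h2⟩ := fgw_key N x y hx hy σ
    set A := ∑ i, x i * y i
    set B := ∑ i, x i * y i.rev
    set S := ∑ i, x i * y (σ i)
    rcases le_or_gt 0 (S + c) with hs | hs
    · nlinarith
    · nlinarith
  · intro h σ
    push_neg at h
    obtain ⟨h1, h2⟩ := fgw_key N x y hx hy σ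
    set A := ∑ i, x i * y i
    set B := ∑ i, x i * y i.rev
    set S := ∑ i, x i * y (σ i)
    rcases le_or_gt 0 (S + c) with hs | hs
    · nlinarith
    · nlinarith
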